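/- Let (X, π) be a finite symmetric two-player game whose action set X is endowed with a linear order, and let (X, Δ) be its relative payoff game. If Δ has increasing differences or decreasing differences on X × X, then imitation is essentially unbeatable: for every initial action y_0 ∈ X, every opponent sequence (x_t), and every T, ∑_{t=0}^{T} Δ(x_t, y_t) ≤ max_{x,y ∈ X} Δ(x, y). -/

import Mathlib

/-- The imitator's action sequence: `y₀` initially; imitate the opponent's previous
action iff it earned a strictly positive relative payoff. -/
noncomputable def imitSeq {X : Type*} (Δ : X → X → ℝ) (x : ℕ → X) (y0 : X) : ℕ → X
  | 0 => y0
  | t + 1 => if 0 < Δ (x t) (imitSeq Δ x y0 t) then x t else imitSeq Δ x y0 t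

/-- Imitation is essentially unbeatable: in total, the opponent can beat the imitator
by at most the maximal one-period relative payoff differential. -/
def EssentiallyUnbeatable {X : Type*} (Δ : X → X → ℝ) : Prop :=
  ∀ (y0 : X) (x : ℕ → X) (T : ℕ),
    ∑ t ∈ Finset.range (T + 1), Δ (x t) (imitSeq Δ x y0 t)
      ≤ sSup (Set.range fun p : X × X => Δ p.1 p.2)

/-- An antisymmetric function with decreasing differences is super-additive along
triples. -/
lemma imit_add_le {X : Type*} [LinearOrder X] (Δ : X → X → ℝ)
    (anti : ∀ x y, Δ x y = -(Δ y x))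
    (hdd : ∀ x' x'' y' y'' : X, x' < x'' → y' < y'' →
        Δ x'' y'' - Δ x' y'' ≤ Δ x'' y' - Δ x' y') :
    ∀ a b c : X, Δ c b + Δ b a ≤ Δ c a := by
  have h0 : ∀ x : X, Δ x x = 0 := by
    intro x; have := anti x x; linarith
  intro a b c
  rcases lt_trichotomy a b with hab | hab | hab
  · rcases lt_trichotomy b c with hbc | hbc | hbc
    · -- a < b < c
      have := hdd b c a b hbc hab
      linarith [h0 b]
    · -- b = c
      subst hbc; linarith [h0 b]
    · -- a < b, c < b
      rcases lt_trichotomy a c with hac | hac | hac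
      · -- a < c < b
        have := hdd a c a b hac hab
        linarith [anti a b, h0 a]
      · -- a = c
        subst hac; linarith [anti a b, h0 a]
      · -- c < a < b
        have := hdd a b c a hab hac
        linarith [anti b c, anti a c, h0 a]
  · -- a = b
    subst hab; linarith [h0 a]
  · rcases lt_trichotomy b c with hbc | hbc | hbc
    · -- b < a, b < c
      rcases lt_trichotomy a c with hac | hac | hac
      · -- b < a < c
        have := hdd b a b c hab hbc
        linarith [anti a c, anti b c, anti a b, h0 b]
      · -- a = c
        subst hac; linarith [anti a b, h0 a]
      · -- b < c < a
        have := hdd c a b c hac hbc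
        linarith [anti a c, anti a b, h0 c]
    · -- b = c
      subst hbc; linarith [h0 b]
    · -- c < b < a
      have := hdd c b b a hbc hab
      linarith [h0 b]

/-- An antisymmetric function with decreasing differences is additive (a cocycle). -/
lemma imit_cocycle {X : Type*} [LinearOrder X] (Δ : X → X → ℝ)
    (anti : ∀ x y, Δ x y = -(Δ y x))
    (hdd : ∀ x' x'' y' y'' : X, x' < x'' → y' < y'' →
        Δ x'' y'' - Δ x' y'' ≤ Δ x'' y' - Δ x' y') :
    ∀ a b c : X, Δ c a = Δ c b + Δ b a := by
  intro a b c
  have h1 := imit_add_le Δ anti hdd a b c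
  have h2 := imit_add_le Δ anti hdd c b a
  have e1 := anti a b
  have e2 := anti b c
  have e3 := anti a c
  linarith

theorem stmt9 {X : Type*} [Fintype X] [Nonempty X] [LinearOrder X]
    (π : X → X → ℝ) (Δ : X → X → ℝ) (hΔ : ∀ x y, Δ x y = π x y - π y x)
    (hdiff :
      (∀ x' x'' y' y'' : X, x' < x'' → y' < y'' →
        Δ x'' y' - Δ x' y' ≤ Δ x'' y'' - Δ x' y'') ∨
      (∀ x' x'' y' y'' : X, x' < x'' → y' < y'' →
        Δ x'' y'' - Δ x' y'' ≤ Δ x'' y' - Δ x' y')) :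
    EssentiallyUnbeatable Δ := by
  have anti : ∀ x y, Δ x y = -(Δ y x) := by
    intro x y; rw [hΔ, hΔ]; ring
  -- In either case, Δ is a cocycle.
  have hcoc : ∀ a b c : X, Δ c a = Δ c b + Δ b a := by
    rcases hdiff with hid | hdd
    · -- increasing differences: apply the lemma to -Δ
      have anti' : ∀ x y, (fun u v => -(Δ u v)) x y = -((fun u v => -(Δ u v)) y x) := by
        intro x y; simp [anti x y]
      have hdd' : ∀ x' x'' y' y'' : X, x' < x'' → y' < y'' →
          (fun u v => -(Δ u v)) x'' y'' - (fun u v => -(Δ u v)) x' y''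
            ≤ (fun u v => -(Δ u v)) x'' y' - (fun u v => -(Δ u v)) x' y' := by
        intro x' x'' y' y'' hx hy
        have := hid x' x'' y' y'' hx hy
        simp only
        linarith
      intro a b c
      have := imit_cocycle (fun u v => -(Δ u v)) anti' hdd' a b c
      linarith
    · exact imit_cocycle Δ anti hdd
  intro y0 x T
  set y : ℕ → X := imitSeq Δ x y0 with hy
  -- potential function
  set g : X → ℝ := fun z => Δ z y0 with hg
  have hpot : ∀ a b : X, Δ a b = g a - g b := by
    intro a b
    have := hcoc b y0 a
    have := anti b y0
    simp only [hg]
    linarith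
  have hstep : ∀ t, Δ (x t) (y t) ≤ g (y (t + 1)) - g (y t) := by
    intro t
    have : y (t + 1) = if 0 < Δ (x t) (y t) then x t else y t := rfl
    rw [this]
    split_ifs with h
    · rw [hpot (x t) (y t)] at h ⊢
    · rw [hpot (x t) (y t)] at h ⊢
      push_neg at h
      linarith
  calc ∑ t ∈ Finset.range (T + 1), Δ (x t) (y t)
      ≤ ∑ t ∈ Finset.range (T + 1), (g (y (t + 1)) - g (y t)) :=
        Finset.sum_le_sum fun t _ => hstep t
    _ = g (y (T + 1)) - g (y 0) := Finset.sum_range_sub (fun t => g (y t)) (T + 1)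
    _ = Δ (y (T + 1)) y0 := by
        have h0 : y 0 = y0 := rfl
        have : g (y 0) = 0 := by
          rw [h0]; simp only [hg]; have := anti y0 y0; linarith
        rw [this]; simp only [hg]; ring
    _ ≤ sSup (Set.range fun p : X × X => Δ p.1 p.2) := by
        apply le_csSup
        · exact Set.Finite.bddAbove (Set.finite_range _)
        · exact ⟨(y (T + 1), y0), rfl⟩
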